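/- Let α = 2 and β > 0, let φ be an analytic self-map of the open unit disk D, and let g be analytic on D. Then the operator U_gC_φ, defined by (U_gC_φ f)(z) = ∫₀^z f(φ(ξ)) g'(ξ) dξ, is bounded from Z^2 to Z^β if and only if sup_{z∈D} (1−|z|²)^β |g'(z)φ'(z)| / (1−|φ(z)|²) < ∞ and sup_{z∈D} (1−|z|²)^β log(2/(1−|φ(z)|²)) |g''(z)| < ∞. -/

import Mathlib

noncomputable section

/-- The open unit disk in the complex plane. -/
def uD : Set ℂ := Metric.ball 0 1

/-- The Zygmund-type quantity `(1-|z|^2)^a * |f''(z)|`. -/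
def zygS (a : ℝ) (f : ℂ → ℂ) (z : ℂ) : ℝ := (1 - ‖z‖ ^ 2) ^ a * ‖deriv (deriv f) z‖

/-- Membership in the Zygmund-type space `Z^a`. -/
def memZ (a : ℝ) (f : ℂ → ℂ) : Prop :=
  AnalyticOn ℂ f uD ∧ ∃ M : ℝ, ∀ z ∈ uD, zygS a f z ≤ M

/-- The Zygmund-type norm `‖f‖_{Z^a} = |f 0| + |f' 0| + sup_{z ∈ D} (1-|z|^2)^a |f''(z)|`. -/
def zNorm (a : ℝ) (f : ℂ → ℂ) : ℝ := ‖f 0‖ + ‖deriv f 0‖ + sSup (zygS a f '' uD)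

/-- Membership in the weighted space `H^∞_{v_b}` (for `u` analytic on `uD`). -/
def memHv (b : ℝ) (u : ℂ → ℂ) : Prop :=
  ∃ M : ℝ, ∀ z ∈ uD, (1 - ‖z‖ ^ 2) ^ b * ‖u z‖ ≤ M

/-- `T` is a bounded operator from `Z^a` to `Z^b`. -/
def boundedOp (a b : ℝ) (T : (ℂ → ℂ) → ℂ → ℂ) : Prop :=
  (∀ f, memZ a f → memZ b (T f)) ∧
    ∃ C > 0, ∀ f, memZ a f → zNorm b (T f) ≤ C * zNorm a f

/-- `(U_g C_φ f)(z) = ∫₀^z f(φ(ξ)) g'(ξ) dξ`, parametrized along the segment from `0` to `z`. -/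
def UgCphi (g φ : ℂ → ℂ) (f : ℂ → ℂ) : ℂ → ℂ :=
  fun z => ∫ t in (0:ℝ)..1, z * (f (φ ((t : ℂ) * z)) * deriv g ((t : ℂ) * z))

lemma uD_open : IsOpen uD := Metric.isOpen_ball
lemma mem_uD {z : ℂ} : z ∈ uD ↔ ‖z‖ < 1 := by simp [uD, Metric.mem_ball, dist_zero_right]
lemma zero_mem_uD : (0:ℂ) ∈ uD := by simp [mem_uD]

lemma smul_mem_uD {z : ℂ} (hz : z ∈ uD) {t : ℝ} (ht0 : 0 ≤ t) (ht1 : t ≤ 1) :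
    (t:ℂ) * z ∈ uD := by
  rw [mem_uD] at hz ⊢
  calc ‖(t:ℂ) * z‖ = t * ‖z‖ := by
        rw [norm_mul, Complex.norm_real, Real.norm_of_nonneg ht0]
    _ ≤ 1 * ‖z‖ := by nlinarith [norm_nonneg z]
    _ < 1 := by simpa using hz

lemma one_sub_sq_pos {z : ℂ} (hz : z ∈ uD) : 0 < 1 - ‖z‖ ^ 2 := by
  have := mem_uD.1 hz
  nlinarith [norm_nonneg z]

/-- rpow with exponent 2 on positive base. -/
lemma rpow_two_of {x : ℝ} : x ^ (2:ℝ) = x ^ (2:ℕ) := by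
  rw [show (2:ℝ) = ((2:ℕ):ℝ) by norm_num, Real.rpow_natCast]

lemma zygS_two {f : ℂ → ℂ} {z : ℂ} : zygS 2 f z = (1 - ‖z‖ ^ 2) ^ (2:ℕ) * ‖deriv (deriv f) z‖ := by
  rw [zygS, rpow_two_of]

lemma zygS_nonneg {a : ℝ} {f : ℂ → ℂ} {z : ℂ} (hz : z ∈ uD) : 0 ≤ zygS a f z := by
  have := one_sub_sq_pos hz
  exact mul_nonneg (Real.rpow_nonneg this.le a) (norm_nonneg _)

/-- FTC along segment plus norm bound. The `b`-integral is `∫ t in 0..1, b t`. -/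
lemma segment_norm_bound {u : ℂ → ℂ} (hu : AnalyticOnNhd ℂ u uD) {w : ℂ} (hw : w ∈ uD)
    {b : ℝ → ℝ} (hbi : IntervalIntegrable b MeasureTheory.volume 0 1)
    (hbnn : ∀ t ∈ Set.Icc (0:ℝ) 1, 0 ≤ b t)
    (hbd : ∀ t ∈ Set.Icc (0:ℝ) 1, ‖w‖ * ‖deriv u ((t:ℂ)*w)‖ ≤ b t) :
    ‖u w‖ ≤ ‖u 0‖ + ∫ t in (0:ℝ)..1, b t := by
  have hder : ∀ t ∈ Set.uIcc (0:ℝ) 1,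
      HasDerivAt (fun s : ℝ => u ((s:ℂ)*w)) (w • deriv u ((t:ℂ)*w)) t := by
    intro t ht
    rw [Set.uIcc_of_le zero_le_one] at ht
    have hm : (t:ℂ)*w ∈ uD := smul_mem_uD hw ht.1 ht.2
    have hi : HasDerivAt (fun s : ℝ => (s:ℂ) * w) w t := by
      simpa using (Complex.ofRealCLM.hasDerivAt (x := t)).mul_const w
    exact ((hu _ hm).differentiableAt.hasDerivAt).scomp t hi
  have hcont : ContinuousOn (fun t : ℝ => w • deriv u ((t:ℂ)*w)) (Set.uIcc (0:ℝ) 1) := by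
    rw [Set.uIcc_of_le zero_le_one]
    refine ContinuousOn.const_smul (g := fun t : ℝ => deriv u ((t:ℂ)*w)) ?_ w
    have hdc : ContinuousOn (deriv u) uD :=
      fun z hz => ((hu.deriv) z hz).continuousAt.continuousWithinAt
    exact hdc.comp ((Complex.continuous_ofReal.mul continuous_const).continuousOn)
      (fun t ht => smul_mem_uD hw ht.1 ht.2)
  have hint : IntervalIntegrable (fun t : ℝ => w • deriv u ((t:ℂ)*w)) MeasureTheory.volume 0 1 :=
    (by rwa [Set.uIcc_of_le zero_le_one] at hcont :
      ContinuousOn _ (Set.Icc (0:ℝ) 1)).intervalIntegrable_of_Icc zero_le_one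
  have hftc := intervalIntegral.integral_eq_sub_of_hasDerivAt hder hint
  simp only [Complex.ofReal_one, Complex.ofReal_zero, one_mul, zero_mul] at hftc
  have h1 : u w = u 0 + ∫ t in (0:ℝ)..1, w • deriv u ((t:ℂ)*w) := by
    rw [hftc]; ring
  rw [h1]
  refine le_trans (norm_add_le _ _) (add_le_add le_rfl ?_)
  have := intervalIntegral.norm_integral_le_abs_of_norm_le (μ := MeasureTheory.volume)
    (f := fun t : ℝ => w • deriv u ((t:ℂ)*w)) (g := b) (a := 0) (b := 1)
    (by
      rw [MeasureTheory.ae_restrict_iff' measurableSet_uIoc]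
      filter_upwards with t ht
      have htI : t ∈ Set.Icc (0:ℝ) 1 := by
        rw [Set.uIoc_of_le zero_le_one] at ht; exact Set.Ioc_subset_Icc_self ht
      simpa [norm_smul] using hbd t htI) hbi
  refine le_trans this (le_of_eq (abs_of_nonneg ?_))
  apply intervalIntegral.integral_nonneg zero_le_one
  intro t ht; exact hbnn t ht

/-- `∫₀¹ M r/(1-tr)² dt = M/(1-r) - M`. -/
lemma myInt1 {M r : ℝ} (hr0 : 0 ≤ r) (hr1 : r < 1) :
    ∫ t in (0:ℝ)..1, M * r / (1 - t*r)^2 = M / (1-r) - M := by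
  have hne : ∀ t ∈ Set.uIcc (0:ℝ) 1, 1 - t*r ≠ 0 := by
    intro t ht
    rw [Set.uIcc_of_le zero_le_one] at ht
    nlinarith [ht.1, ht.2]
  have hder : ∀ t ∈ Set.uIcc (0:ℝ) 1,
      HasDerivAt (fun t : ℝ => M * (1 - t*r)⁻¹) (M * r / (1 - t*r)^2) t := by
    intro t ht
    have hc : HasDerivAt (fun t : ℝ => 1 - t*r) (-r) t := by
      simpa using ((hasDerivAt_id t).mul_const r).const_sub 1
    have := (hc.inv (hne t ht)).const_mul M
    convert (preTransparency := .default) this using 1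
    field_simp
  have hcont : ContinuousOn (fun t : ℝ => M * r / (1 - t*r)^2) (Set.uIcc (0:ℝ) 1) := by
    apply ContinuousOn.div continuousOn_const
    · exact ((continuousOn_const.sub ((continuousOn_id).mul continuousOn_const)).pow 2)
    · intro t ht; exact pow_ne_zero 2 (hne t ht)
  have := intervalIntegral.integral_eq_sub_of_hasDerivAt hder
    (hcont.intervalIntegrable)
  rw [this]
  field_simp
  ring

/-- `∫₀¹ K r/(1-tr) dt = -K log(1-r)`. -/
lemma myInt2 {K r : ℝ} (hr0 : 0 ≤ r) (hr1 : r < 1) :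
    ∫ t in (0:ℝ)..1, K * r / (1 - t*r) = -(K * Real.log (1-r)) := by
  have hne : ∀ t ∈ Set.uIcc (0:ℝ) 1, 1 - t*r ≠ 0 := by
    intro t ht
    rw [Set.uIcc_of_le zero_le_one] at ht
    nlinarith [ht.1, ht.2]
  have hder : ∀ t ∈ Set.uIcc (0:ℝ) 1,
      HasDerivAt (fun t : ℝ => -(K * Real.log (1 - t*r))) (K * r / (1 - t*r)) t := by
    intro t ht
    have hc : HasDerivAt (fun t : ℝ => 1 - t*r) (-r) t := by
      simpa using ((hasDerivAt_id t).mul_const r).const_sub 1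
    have hlog := (Real.hasDerivAt_log (hne t ht)).comp t hc
    have := (hlog.const_mul K).neg
    convert (preTransparency := .default) this using 1
    field_simp
  have hcont : ContinuousOn (fun t : ℝ => K * r / (1 - t*r)) (Set.uIcc (0:ℝ) 1) := by
    apply ContinuousOn.div continuousOn_const
    · exact continuousOn_const.sub ((continuousOn_id).mul continuousOn_const)
    · intro t ht; exact hne t ht
  have := intervalIntegral.integral_eq_sub_of_hasDerivAt hder (hcont.intervalIntegrable)
  rw [this]
  simp

lemma M_nonneg {f : ℂ → ℂ} {M : ℝ} (hM : ∀ z ∈ uD, zygS 2 f z ≤ M) : 0 ≤ M :=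
  le_trans (zygS_nonneg zero_mem_uD) (hM 0 zero_mem_uD)

lemma deriv_growth {f : ℂ → ℂ} {M : ℝ} (hf : AnalyticOnNhd ℂ f uD)
    (hM : ∀ z ∈ uD, zygS 2 f z ≤ M) {w : ℂ} (hw : w ∈ uD) :
    ‖deriv f w‖ ≤ (‖deriv f 0‖ + 2*M) / (1 - ‖w‖^2) := by
  have hM0 : 0 ≤ M := M_nonneg hM
  set r : ℝ := ‖w‖ with hrdef
  have hr0 : 0 ≤ r := norm_nonneg w
  have hr1 : r < 1 := mem_uD.1 hw
  have hne : ∀ t ∈ Set.Icc (0:ℝ) 1, 0 < 1 - t*r := by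
    intro t ht; nlinarith [ht.1, ht.2]
  have hbi : IntervalIntegrable (fun t : ℝ => M * r / (1 - t*r)^2) MeasureTheory.volume 0 1 := by
    apply ContinuousOn.intervalIntegrable
    apply ContinuousOn.div continuousOn_const
    · exact (continuousOn_const.sub ((continuousOn_id).mul continuousOn_const)).pow 2
    · intro t ht
      rw [Set.uIcc_of_le zero_le_one] at ht
      exact pow_ne_zero 2 (hne t ht).ne'
  have key := segment_norm_bound (hf.deriv) hw (b := fun t => M * r / (1 - t*r)^2) hbi
    (by
      intro t ht
      have := hne t ht
      positivity)
    (by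
      intro t ht
      have h1 : (t:ℂ) * w ∈ uD := smul_mem_uD hw ht.1 ht.2
      have h2 := hM _ h1
      rw [zygS_two] at h2
      have hnorm : ‖(t:ℂ) * w‖ = t * r := by
        rw [norm_mul, Complex.norm_real, Real.norm_of_nonneg ht.1]
      rw [hnorm] at h2
      set D := ‖deriv (deriv f) ((t:ℂ) * w)‖ with hD
      have hDnn : 0 ≤ D := norm_nonneg _
      have hpos := hne t ht
      have hmono : (1 - t*r) ≤ 1 - (t*r)^2 := by
        nlinarith [mul_nonneg (mul_nonneg ht.1 hr0) hpos.le]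
      have hsq : (1 - t*r)^2 * D ≤ M := by nlinarith [h2, hpos]
      rw [le_div_iff₀ (by positivity)]
      nlinarith [hsq, hr0, hpos])
  rw [myInt1 hr0 hr1] at key
  have hpos2 : (0:ℝ) < 1 - r^2 := by nlinarith
  rw [le_div_iff₀ hpos2]
  have h1r : (1:ℝ) - r ≠ 0 := by nlinarith
  have e : M/(1-r)*(1-r^2) = M*(1+r) := by
    field_simp
    ring
  nlinarith [key, norm_nonneg (deriv f 0), e]

lemma value_growth {f : ℂ → ℂ} {M : ℝ} (hf : AnalyticOnNhd ℂ f uD)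
    (hM : ∀ z ∈ uD, zygS 2 f z ≤ M) {w : ℂ} (hw : w ∈ uD) :
    ‖f w‖ ≤ 3 * (‖f 0‖ + ‖deriv f 0‖ + 2*M) * Real.log (2/(1 - ‖w‖^2)) := by
  have hM0 : 0 ≤ M := M_nonneg hM
  set K : ℝ := ‖deriv f 0‖ + 2*M with hKdef
  have hK0 : 0 ≤ K := by positivity
  set r : ℝ := ‖w‖ with hrdef
  have hr0 : 0 ≤ r := norm_nonneg w
  have hr1 : r < 1 := mem_uD.1 hw
  have hne : ∀ t ∈ Set.Icc (0:ℝ) 1, 0 < 1 - t*r := by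
    intro t ht; nlinarith [ht.1, ht.2]
  have hbi : IntervalIntegrable (fun t : ℝ => K * r / (1 - t*r)) MeasureTheory.volume 0 1 := by
    apply ContinuousOn.intervalIntegrable
    apply ContinuousOn.div continuousOn_const
    · exact continuousOn_const.sub ((continuousOn_id).mul continuousOn_const)
    · intro t ht
      rw [Set.uIcc_of_le zero_le_one] at ht
      exact (hne t ht).ne'
  have key := segment_norm_bound hf hw (b := fun t => K * r / (1 - t*r)) hbi
    (by
      intro t ht
      have := hne t ht
      positivity)
    (by
      intro t ht
      have h1 : (t:ℂ) * w ∈ uD := smul_mem_uD hw ht.1 ht.2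
      have h2 := deriv_growth hf hM h1
      have hnorm : ‖(t:ℂ) * w‖ = t * r := by
        rw [norm_mul, Complex.norm_real, Real.norm_of_nonneg ht.1]
      rw [hnorm] at h2
      have hpos := hne t ht
      have hpos2 : (0:ℝ) < 1 - (t*r)^2 := by
        nlinarith [mul_nonneg (mul_nonneg ht.1 hr0) hpos.le]
      have h3 : ‖deriv f ((t:ℂ)*w)‖ ≤ K / (1 - t*r) := by
        refine le_trans h2 ?_
        apply div_le_div_of_nonneg_left hK0 hpos
        nlinarith [mul_nonneg (mul_nonneg ht.1 hr0) hpos.le]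
      rw [le_div_iff₀ hpos] at h3 ⊢
      calc r * ‖deriv f ((t:ℂ)*w)‖ * (1 - t*r)
          = r * (‖deriv f ((t:ℂ)*w)‖ * (1 - t*r)) := by ring
        _ ≤ r * K := by
            apply mul_le_mul_of_nonneg_left h3 hr0
        _ ≤ K * r := by ring_nf; exact le_rfl)
  rw [myInt2 hr0 hr1] at key
  set L : ℝ := Real.log (2/(1 - r^2)) with hLdef
  have hL2 : Real.log 2 ≤ L := by
    apply Real.log_le_log (by norm_num)
    rw [le_div_iff₀ (by nlinarith)]
    nlinarith
  have hLpos : (1:ℝ)/2 ≤ L := le_trans (by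
    have := Real.log_two_gt_d9
    linarith) hL2
  have hlog1 : -Real.log (1-r) ≤ L := by
    rw [← Real.log_inv]
    have h1rp : (0:ℝ) < 1 - r := by nlinarith
    apply Real.log_le_log (by positivity)
    rw [inv_eq_one_div, div_le_div_iff₀ (by nlinarith) (by nlinarith)]
    nlinarith
  have hKL : -(K * Real.log (1-r)) ≤ K * L := by
    have := mul_le_mul_of_nonneg_left hlog1 hK0
    nlinarith
  have hf0 : ‖f 0‖ ≤ 2 * ‖f 0‖ * L := by
    nlinarith [norm_nonneg (f 0), hLpos]
  have hgoal : ‖f 0‖ + -(K * Real.log (1-r)) ≤ 3 * (‖f 0‖ + K) * L := by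
    nlinarith [hKL, hf0, norm_nonneg (f 0), hK0, hLpos]
  calc ‖f w‖ ≤ ‖f 0‖ + -(K * Real.log (1-r)) := key
    _ ≤ 3 * (‖f 0‖ + K) * L := hgoal
    _ = 3 * (‖f 0‖ + ‖deriv f 0‖ + 2*M) * Real.log (2/(1 - ‖w‖^2)) := by
        rw [hKdef, hLdef, hrdef]; ring_nf


lemma primitive_hasDerivAt {h : ℂ → ℂ} (hh : AnalyticOnNhd ℂ h uD)
    {z₀ : ℂ} (hz₀ : z₀ ∈ uD) :
    HasDerivAt (fun z => ∫ t in (0:ℝ)..1, z * h ((t:ℂ) * z)) (h z₀) z₀ := by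
  have hz1 : ‖z₀‖ < 1 := mem_uD.1 hz₀
  set r : ℝ := (1 + ‖z₀‖)/2 with hr
  set ε : ℝ := (1 - ‖z₀‖)/2 with hε
  have hεpos : 0 < ε := by rw [hε]; linarith
  have hr1 : r < 1 := by rw [hr]; linarith
  have hrnn : 0 ≤ r := by positivity
  have hcb : Metric.closedBall (0:ℂ) r ⊆ uD := by
    intro y hy
    rw [mem_uD]
    exact lt_of_le_of_lt (by simpa [dist_zero_right] using hy) hr1
  have hmem : ∀ x ∈ Metric.ball z₀ ε, ∀ t : ℝ, t ∈ Set.Icc (0:ℝ) 1 →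
      (t:ℂ) * x ∈ Metric.closedBall (0:ℂ) r := by
    intro x hx t ht
    have hxn : ‖x‖ < r := by
      have := mem_ball_iff_norm.1 hx
      calc ‖x‖ ≤ ‖x - z₀‖ + ‖z₀‖ := by
            simpa using norm_add_le (x - z₀) z₀
        _ < ε + ‖z₀‖ := by linarith
        _ = r := by simp [hε, hr]; ring
    simp only [Metric.mem_closedBall, dist_zero_right, norm_mul, Complex.norm_real,
      Real.norm_of_nonneg ht.1]
    nlinarith [norm_nonneg x, ht.1, ht.2]
  -- continuity of h and deriv h on the closed ball, bounds
  have hhc : ContinuousOn h uD := fun z hz => (hh z hz).continuousAt.continuousWithinAt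
  have hh' : AnalyticOnNhd ℂ (deriv h) uD := hh.deriv
  have hh'c : ContinuousOn (deriv h) uD := fun z hz => (hh' z hz).continuousAt.continuousWithinAt
  obtain ⟨M₀, hM₀⟩ := (isCompact_closedBall (0:ℂ) r).exists_bound_of_continuousOn
    (hhc.mono hcb)
  obtain ⟨M₁, hM₁⟩ := (isCompact_closedBall (0:ℂ) r).exists_bound_of_continuousOn
    (hh'c.mono hcb)
  have hM₀0 : 0 ≤ M₀ := le_trans (norm_nonneg _) (hM₀ 0 (by simp [hrnn]))
  have hM₁0 : 0 ≤ M₁ := le_trans (norm_nonneg _) (hM₁ 0 (by simp [hrnn]))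
  set F : ℂ → ℝ → ℂ := fun x t => x * h ((t:ℂ) * x) with hF
  set F' : ℂ → ℝ → ℂ := fun x t => h ((t:ℂ) * x) + x * ((t:ℂ) * deriv h ((t:ℂ) * x)) with hF'
  have hsub : Set.uIoc (0:ℝ) 1 ⊆ Set.Icc (0:ℝ) 1 := by
    rw [Set.uIoc_of_le zero_le_one]; exact Set.Ioc_subset_Icc_self
  have hcont : ∀ x ∈ Metric.ball z₀ ε, ContinuousOn (F x) (Set.Icc (0:ℝ) 1) := by
    intro x hx
    apply ContinuousOn.mul continuousOn_const
    apply (hhc.mono hcb).comp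
    · exact (Complex.continuous_ofReal.mul continuous_const).continuousOn
    · intro t ht; exact hmem x hx t ht
  have hcont' : ContinuousOn (F' z₀) (Set.Icc (0:ℝ) 1) := by
    have hz₀b : z₀ ∈ Metric.ball z₀ ε := Metric.mem_ball_self hεpos
    apply ContinuousOn.add
    · apply (hhc.mono hcb).comp
      · exact (Complex.continuous_ofReal.mul continuous_const).continuousOn
      · intro t ht; exact hmem z₀ hz₀b t ht
    · apply ContinuousOn.mul continuousOn_const
      apply ContinuousOn.mul (Complex.continuous_ofReal.continuousOn)
      apply (hh'c.mono hcb).comp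
      · exact (Complex.continuous_ofReal.mul continuous_const).continuousOn
      · intro t ht; exact hmem z₀ hz₀b t ht
  have key := intervalIntegral.hasDerivAt_integral_of_dominated_loc_of_deriv_le
    (F := F) (F' := F') (x₀ := z₀) (a := (0:ℝ)) (b := 1) (μ := MeasureTheory.volume)
    (bound := fun _ => M₀ + M₁) (Metric.ball_mem_nhds z₀ hεpos)
    (by
      filter_upwards [Metric.ball_mem_nhds z₀ hεpos] with x hx
      exact ((hcont x hx).mono hsub).aestronglyMeasurable measurableSet_uIoc)
    ((hcont z₀ (Metric.mem_ball_self hεpos)).intervalIntegrable_of_Icc zero_le_one)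
    ((hcont'.mono hsub).aestronglyMeasurable measurableSet_uIoc)
    (by
      filter_upwards with t ht x hx
      have htIcc : t ∈ Set.Icc (0:ℝ) 1 := hsub ht
      have hm := hmem x hx t htIcc
      have hxr : ‖x‖ ≤ r := by
        have := hmem x hx 1 (by norm_num)
        simpa [dist_zero_right] using this
      calc ‖F' x t‖ ≤ ‖h ((t:ℂ) * x)‖ + ‖x * ((t:ℂ) * deriv h ((t:ℂ) * x))‖ := norm_add_le _ _
        _ ≤ M₀ + M₁ := by
            have h1 : ‖h ((t:ℂ)*x)‖ ≤ M₀ := hM₀ _ hm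
            have h2 : ‖deriv h ((t:ℂ)*x)‖ ≤ M₁ := hM₁ _ hm
            have : ‖x * ((t:ℂ) * deriv h ((t:ℂ) * x))‖ ≤ M₁ := by
              rw [norm_mul, norm_mul, Complex.norm_real, Real.norm_of_nonneg htIcc.1]
              have hx1 : ‖x‖ ≤ 1 := hxr.trans hr1.le
              have htd : t * ‖deriv h ((t:ℂ)*x)‖ ≤ M₁ := by
                nlinarith [norm_nonneg (deriv h ((t:ℂ)*x)), htIcc.1, htIcc.2]
              calc ‖x‖ * (t * ‖deriv h ((t:ℂ)*x)‖) ≤ 1 * M₁ :=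
                    mul_le_mul hx1 htd (mul_nonneg htIcc.1 (norm_nonneg _)) zero_le_one
                _ = M₁ := one_mul _
            linarith)
    (by simp [intervalIntegrable_const])
    (by
      filter_upwards with t ht x hx
      have htIcc : t ∈ Set.Icc (0:ℝ) 1 := hsub ht
      have hm : (t:ℂ) * x ∈ uD := hcb (hmem x hx t htIcc)
      have hinner : HasDerivAt (fun y : ℂ => (t:ℂ) * y) (t:ℂ) x := by
        simpa using (hasDerivAt_id x).const_mul (t:ℂ)
      have houter : HasDerivAt h (deriv h ((t:ℂ)*x)) ((t:ℂ)*x) :=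
        ((hh _ hm).differentiableAt).hasDerivAt
      have hcomp := houter.comp x hinner
      have := (hasDerivAt_id x).mul hcomp
      convert (preTransparency := .default) this using 1
      show F' x t = _
      simp only [hF', Function.comp, id]
      ring)
  -- now identify the integral ∫ F' z₀ with h z₀
  have hFTC : (∫ t in (0:ℝ)..1, F' z₀ t) = h z₀ := by
    have hG : ∀ t ∈ Set.uIcc (0:ℝ) 1,
        HasDerivAt (fun s : ℝ => (s:ℂ) * h ((s:ℂ) * z₀)) (F' z₀ t) t := by
      intro t ht
      have hu : HasDerivAt (fun s : ℝ => (s:ℂ)) 1 t := by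
        exact Complex.ofRealCLM.hasDerivAt (x := t)
      have htIcc : t ∈ Set.Icc (0:ℝ) 1 := by rwa [Set.uIcc_of_le zero_le_one] at ht
      have hm : (t:ℂ) * z₀ ∈ uD := hcb (hmem z₀ (Metric.mem_ball_self hεpos) t htIcc)
      have hi : HasDerivAt (fun s : ℝ => (s:ℂ) * z₀) z₀ t := by
        simpa using hu.mul_const z₀
      have houter : HasDerivAt h (deriv h ((t:ℂ)*z₀)) ((t:ℂ)*z₀) :=
        ((hh _ hm).differentiableAt).hasDerivAt
      have hcomp : HasDerivAt (fun s : ℝ => h ((s:ℂ) * z₀)) (z₀ • deriv h ((t:ℂ)*z₀)) t :=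
        houter.scomp t hi
      have := hu.mul hcomp
      convert (preTransparency := .default) this using 1
      show F' z₀ t = _
      simp only [hF', smul_eq_mul]
      ring
    have hint : IntervalIntegrable (F' z₀) MeasureTheory.volume 0 1 :=
      hcont'.intervalIntegrable_of_Icc zero_le_one
    have := intervalIntegral.integral_eq_sub_of_hasDerivAt hG hint
    simpa using this
  rw [hFTC] at key
  exact key.2


/-- the function `1 - conj a * z`. -/
def ua (a z : ℂ) : ℂ := 1 - (starRingEnd ℂ) a * z

lemma ua_re {a z : ℂ} (ha : ‖a‖ < 1) (hz : ‖z‖ ≤ 1) : 1 - ‖a‖ * ‖z‖ ≤ (ua a z).re := by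
  have h1 : (ua a z).re = 1 - ((starRingEnd ℂ) a * z).re := by simp [ua]
  rw [h1]
  have h2 : ((starRingEnd ℂ) a * z).re ≤ ‖(starRingEnd ℂ) a * z‖ :=
    Complex.re_le_norm _
  have h3 : ‖(starRingEnd ℂ) a * z‖ = ‖a‖ * ‖z‖ := by
    rw [norm_mul, RCLike.norm_conj]
  linarith [h2, h3 ▸ h2]

lemma ua_re_pos {a z : ℂ} (ha : ‖a‖ < 1) (hz : ‖z‖ ≤ 1) : 0 < (ua a z).re := by
  have := ua_re ha hz
  nlinarith [norm_nonneg a, norm_nonneg z]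

lemma ua_slit {a z : ℂ} (ha : ‖a‖ < 1) (hz : ‖z‖ ≤ 1) : ua a z ∈ Complex.slitPlane :=
  Complex.mem_slitPlane_iff.2 (Or.inl (ua_re_pos ha hz))

lemma ua_ne {a z : ℂ} (ha : ‖a‖ < 1) (hz : ‖z‖ ≤ 1) : ua a z ≠ 0 :=
  Complex.slitPlane_ne_zero (ua_slit ha hz)

lemma ua_norm_lb {a z : ℂ} (ha : ‖a‖ < 1) (hz : ‖z‖ ≤ 1) : 1 - ‖a‖ * ‖z‖ ≤ ‖ua a z‖ :=
  le_trans (ua_re ha hz) (le_trans (Complex.re_le_norm _) (le_of_eq rfl))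

lemma ua_norm_ub {a z : ℂ} (ha : ‖a‖ ≤ 1) (hz : ‖z‖ ≤ 1) : ‖ua a z‖ ≤ 2 := by
  calc ‖ua a z‖ ≤ ‖(1:ℂ)‖ + ‖(starRingEnd ℂ) a * z‖ := norm_sub_le _ _
    _ = 1 + ‖a‖ * ‖z‖ := by rw [norm_one, norm_mul, RCLike.norm_conj]
    _ ≤ 2 := by nlinarith [norm_nonneg a, norm_nonneg z]

/-- key inequality `1 - ‖z‖² ≤ 2‖1 - conj a * z‖`. -/
lemma key_ineq {a z : ℂ} (ha : ‖a‖ < 1) (hz : ‖z‖ ≤ 1) : 1 - ‖z‖^2 ≤ 2 * ‖ua a z‖ := by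
  have h1 := ua_norm_lb ha hz
  nlinarith [norm_nonneg a, norm_nonneg z, mul_le_one₀ ha.le (norm_nonneg z) hz]

/-- the log test function `ℓ_a`. -/
def lA (a : ℂ) : ℂ → ℂ := fun z => Complex.log 2 - Complex.log (ua a z)
/-- its first derivative. -/
def dlA (a : ℂ) : ℂ → ℂ := fun z => (starRingEnd ℂ) a * (ua a z)⁻¹
/-- its second derivative. -/
def d2lA (a : ℂ) : ℂ → ℂ := fun z => ((starRingEnd ℂ) a)^2 * ((ua a z)^2)⁻¹
/-- the real log value `L_a`. -/
def LA (a : ℂ) : ℝ := Real.log (2 / (1 - ‖a‖^2))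

lemma ua_hasDerivAt (a z : ℂ) : HasDerivAt (ua a) (-((starRingEnd ℂ) a)) z := by
  have h := (((hasDerivAt_id z).const_mul ((starRingEnd ℂ) a)).const_sub 1)
  simp only [mul_one] at h
  exact h

lemma lA_hasDerivAt {a z : ℂ} (ha : ‖a‖ < 1) (hz : ‖z‖ ≤ 1) :
    HasDerivAt (lA a) (dlA a z) z := by
  have hlog := (Complex.hasDerivAt_log (ua_slit ha hz)).comp z (ua_hasDerivAt a z)
  have := hlog.const_sub (Complex.log 2)
  convert (preTransparency := .default) this using 1
  simp only [dlA, Function.comp]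
  ring

lemma dlA_hasDerivAt {a z : ℂ} (ha : ‖a‖ < 1) (hz : ‖z‖ ≤ 1) :
    HasDerivAt (dlA a) (d2lA a z) z := by
  have hinv := (ua_hasDerivAt a z).inv (ua_ne ha hz)
  have := hinv.const_mul ((starRingEnd ℂ) a)
  convert (preTransparency := .default) this using 1
  simp only [d2lA]
  field_simp [ua_ne ha hz]

lemma lA_analytic {a : ℂ} (ha : ‖a‖ < 1) : AnalyticOnNhd ℂ (lA a) uD := by
  apply DifferentiableOn.analyticOnNhd _ uD_open
  intro z hz
  exact (lA_hasDerivAt ha (mem_uD.1 hz).le).differentiableAt.differentiableWithinAt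

lemma lA_deriv {a z : ℂ} (ha : ‖a‖ < 1) (hz : ‖z‖ ≤ 1) : deriv (lA a) z = dlA a z :=
  (lA_hasDerivAt ha hz).deriv

lemma lA_deriv2 {a z : ℂ} (ha : ‖a‖ < 1) (hz : z ∈ uD) :
    deriv (deriv (lA a)) z = d2lA a z := by
  have hev : deriv (lA a) =ᶠ[nhds z] dlA a := by
    filter_upwards [uD_open.mem_nhds hz] with w hw
    exact lA_deriv ha (mem_uD.1 hw).le
  rw [hev.deriv_eq]
  exact (dlA_hasDerivAt ha (mem_uD.1 hz).le).deriv

lemma norm_dlA {a z : ℂ} (ha : ‖a‖ < 1) (hz : ‖z‖ ≤ 1) :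
    ‖dlA a z‖ = ‖a‖ / ‖ua a z‖ := by
  rw [dlA, norm_mul, RCLike.norm_conj, norm_inv, div_eq_mul_inv]

lemma norm_d2lA {a z : ℂ} : ‖d2lA a z‖ = ‖a‖^2 / ‖ua a z‖^2 := by
  rw [d2lA, norm_mul, norm_pow, RCLike.norm_conj, norm_inv, norm_pow, div_eq_mul_inv]

lemma zygS_d2lA {a z : ℂ} (ha : ‖a‖ < 1) (hz : z ∈ uD) :
    (1 - ‖z‖^2)^(2:ℕ) * ‖d2lA a z‖ ≤ 4 := by
  have hz1 : ‖z‖ ≤ 1 := (mem_uD.1 hz).le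
  have hki := key_ineq ha hz1
  have hu : 0 < ‖ua a z‖ := norm_pos_iff.2 (ua_ne ha hz1)
  rw [norm_d2lA]
  rw [div_eq_mul_inv, ← mul_assoc]
  have ha1 : ‖a‖^2 ≤ 1 := by nlinarith [norm_nonneg a]
  have h0 : (0:ℝ) ≤ 1 - ‖z‖^2 := by nlinarith [norm_nonneg z, mem_uD.1 hz]
  have h2 : (1-‖z‖^2)^(2:ℕ) ≤ 4 * ‖ua a z‖^2 := by
    nlinarith [mul_le_mul hki hki h0 (by positivity : (0:ℝ) ≤ 2 * ‖ua a z‖)]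
  calc (1-‖z‖^2)^(2:ℕ) * ‖a‖^2 * (‖ua a z‖^2)⁻¹
      ≤ (4 * ‖ua a z‖^2) * 1 * (‖ua a z‖^2)⁻¹ := by
        apply mul_le_mul_of_nonneg_right _ (by positivity)
        apply mul_le_mul h2 ha1 (by positivity) (by positivity)
    _ = 4 := by rw [mul_one, mul_inv_cancel_right₀ (pow_ne_zero 2 hu.ne')]

lemma log_two_le_LA {a : ℂ} (ha : ‖a‖ < 1) : Real.log 2 ≤ LA a := by
  apply Real.log_le_log (by norm_num)
  rw [le_div_iff₀ (by nlinarith [norm_nonneg a])]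
  nlinarith [norm_nonneg a]

lemma LA_pos {a : ℂ} (ha : ‖a‖ < 1) : 0 < LA a :=
  lt_of_lt_of_le (Real.log_pos (by norm_num)) (log_two_le_LA ha)

lemma two_thirds_le_log_two : (2:ℝ)/3 ≤ Real.log 2 := by
  have := Real.log_two_gt_d9
  linarith

lemma ua_zero (a : ℂ) : ua a 0 = 1 := by simp [ua]

lemma log_two_complex : Complex.log 2 = ((Real.log 2 : ℝ) : ℂ) := by
  rw [show (2:ℂ) = ((2:ℝ):ℂ) by norm_num, ← Complex.ofReal_log (by norm_num : (0:ℝ) ≤ 2)]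

lemma norm_log_two_complex : ‖Complex.log 2‖ = Real.log 2 := by
  rw [log_two_complex, Complex.norm_real, Real.norm_of_nonneg (Real.log_nonneg (by norm_num))]

lemma lA_zero (a : ℂ) : lA a 0 = Complex.log 2 := by
  simp [lA, ua_zero]

lemma norm_lA_zero (a : ℂ) : ‖lA a 0‖ = Real.log 2 := by
  rw [lA_zero, norm_log_two_complex]

lemma dlA_zero (a : ℂ) : dlA a 0 = (starRingEnd ℂ) a := by simp [dlA, ua_zero]

lemma norm_dlA_zero (a : ℂ) : ‖dlA a 0‖ = ‖a‖ := by rw [dlA_zero, RCLike.norm_conj]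

lemma ua_self {a : ℂ} : ua a a = (((1:ℝ) - ‖a‖^2 : ℝ) : ℂ) := by
  rw [ua, mul_comm, Complex.mul_conj]
  rw [Complex.normSq_eq_norm_sq]
  push_cast
  ring

lemma lA_self {a : ℂ} (ha : ‖a‖ < 1) : lA a a = ((LA a : ℝ) : ℂ) := by
  have hpos : (0:ℝ) < 1 - ‖a‖^2 := by nlinarith [norm_nonneg a]
  rw [lA, ua_self, ← Complex.ofReal_log hpos.le, log_two_complex, LA,
    Real.log_div (by norm_num) hpos.ne']
  push_cast
  ring

lemma norm_lA_self {a : ℂ} (ha : ‖a‖ < 1) : ‖lA a a‖ = LA a := by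
  rw [lA_self ha, Complex.norm_real, Real.norm_of_nonneg (LA_pos ha).le]

lemma norm_dlA_self {a : ℂ} (ha : ‖a‖ < 1) : ‖dlA a a‖ = ‖a‖ / (1 - ‖a‖^2) := by
  have hpos : (0:ℝ) < 1 - ‖a‖^2 := by nlinarith [norm_nonneg a]
  rw [norm_dlA ha (le_of_lt ha), ua_self, Complex.norm_real,
    Real.norm_of_nonneg hpos.le]

lemma norm_lA_le {a z : ℂ} (ha : ‖a‖ < 1) (hz : ‖z‖ ≤ 1) : ‖lA a z‖ ≤ 7 * LA a := by
  have hL2 := log_two_le_LA ha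
  have hL0 := LA_pos ha
  have hune := ua_ne ha hz
  have hupos : 0 < ‖ua a z‖ := norm_pos_iff.2 hune
  have hub := ua_norm_ub ha.le hz
  have hlb : (1 - ‖a‖^2)/2 ≤ ‖ua a z‖ := by
    have := ua_norm_lb ha hz
    nlinarith [norm_nonneg a, norm_nonneg z, mul_le_one₀ ha.le (norm_nonneg z) hz]
  have hpos : (0:ℝ) < 1 - ‖a‖^2 := by nlinarith [norm_nonneg a]
  -- bound on |Real.log ‖ua a z‖|
  have hup : Real.log ‖ua a z‖ ≤ LA a :=
    le_trans (Real.log_le_log hupos hub) hL2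
  have hdn : -(LA a) ≤ Real.log ‖ua a z‖ := by
    have h1 : Real.log ((1 - ‖a‖^2)/2) ≤ Real.log ‖ua a z‖ :=
      Real.log_le_log (by positivity) hlb
    have h2 : Real.log ((1 - ‖a‖^2)/2) = -(LA a) := by
      rw [Real.log_div hpos.ne' (by norm_num), LA,
        Real.log_div (by norm_num) hpos.ne']
      ring
    linarith
  have habs : |Real.log ‖ua a z‖| ≤ LA a := abs_le.2 ⟨hdn, hup⟩
  -- norm of the complex log
  have hlog : ‖Complex.log (ua a z)‖ ≤ LA a + Real.pi := by
    calc ‖Complex.log (ua a z)‖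
        ≤ |(Complex.log (ua a z)).re| + |(Complex.log (ua a z)).im| :=
          Complex.norm_le_abs_re_add_abs_im _
      _ ≤ LA a + Real.pi := by
          rw [Complex.log_re, Complex.log_im]
          have := Complex.abs_arg_le_pi (ua a z)
          have h3 : |Real.log ‖ua a z‖| ≤ LA a := by
            exact habs
          exact add_le_add h3 this
  calc ‖lA a z‖ ≤ ‖Complex.log 2‖ + ‖Complex.log (ua a z)‖ := norm_sub_le _ _
    _ ≤ Real.log 2 + (LA a + Real.pi) := by
        rw [norm_log_two_complex]; exact add_le_add le_rfl hlog
    _ ≤ 7 * LA a := by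
        have hpi := Real.pi_lt_d2
        have hlt := Real.log_two_lt_d9
        nlinarith [two_thirds_le_log_two]

/-- the squared-log test function `k_a`. -/
def kA (a : ℂ) : ℂ → ℂ := fun z => (lA a z)^2 * ((LA a : ℝ) : ℂ)⁻¹ - 2 * lA a z
def dkA (a : ℂ) : ℂ → ℂ := fun z => 2 * lA a z * dlA a z * ((LA a : ℝ) : ℂ)⁻¹ - 2 * dlA a z
def d2kA (a : ℂ) : ℂ → ℂ := fun z =>
  (2 * (dlA a z)^2 + 2 * lA a z * d2lA a z) * ((LA a : ℝ) : ℂ)⁻¹ - 2 * d2lA a z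

lemma kA_hasDerivAt {a z : ℂ} (ha : ‖a‖ < 1) (hz : ‖z‖ ≤ 1) :
    HasDerivAt (kA a) (dkA a z) z := by
  have h := lA_hasDerivAt ha hz
  have h2 := ((h.mul h).mul_const (((LA a : ℝ) : ℂ))⁻¹).sub (h.const_mul 2)
  convert (preTransparency := .default) h2 using 1
  · funext w
    simp only [kA, Pi.sub_apply, Pi.mul_apply]
    ring
  · simp only [dkA]
    ring

lemma dkA_hasDerivAt {a z : ℂ} (ha : ‖a‖ < 1) (hz : ‖z‖ ≤ 1) :
    HasDerivAt (dkA a) (d2kA a z) z := by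
  have h := lA_hasDerivAt ha hz
  have h' := dlA_hasDerivAt ha hz
  have h2 := ((((h.const_mul 2).mul h').mul_const (((LA a : ℝ) : ℂ))⁻¹)).sub (h'.const_mul 2)
  convert (preTransparency := .default) h2 using 1
  simp only [d2kA]
  ring

lemma kA_analytic {a : ℂ} (ha : ‖a‖ < 1) : AnalyticOnNhd ℂ (kA a) uD := by
  apply DifferentiableOn.analyticOnNhd _ uD_open
  intro z hz
  exact (kA_hasDerivAt ha (mem_uD.1 hz).le).differentiableAt.differentiableWithinAt

lemma kA_deriv {a z : ℂ} (ha : ‖a‖ < 1) (hz : ‖z‖ ≤ 1) : deriv (kA a) z = dkA a z :=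
  (kA_hasDerivAt ha hz).deriv

lemma kA_deriv2 {a z : ℂ} (ha : ‖a‖ < 1) (hz : z ∈ uD) :
    deriv (deriv (kA a)) z = d2kA a z := by
  have hev : deriv (kA a) =ᶠ[nhds z] dkA a := by
    filter_upwards [uD_open.mem_nhds hz] with w hw
    exact kA_deriv ha (mem_uD.1 hw).le
  rw [hev.deriv_eq]
  exact (dkA_hasDerivAt ha (mem_uD.1 hz).le).deriv

lemma kA_self {a : ℂ} (ha : ‖a‖ < 1) : kA a a = -((LA a : ℝ) : ℂ) := by
  have hL := LA_pos ha
  have hLne : ((LA a : ℝ) : ℂ) ≠ 0 := by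
    simpa using hL.ne'
  rw [kA, lA_self ha]
  field_simp
  ring

lemma dkA_self {a : ℂ} (ha : ‖a‖ < 1) : dkA a a = 0 := by
  have hL := LA_pos ha
  have hLne : ((LA a : ℝ) : ℂ) ≠ 0 := by simpa using hL.ne'
  rw [dkA, lA_self ha]
  field_simp
  ring

lemma zygS_d2kA {a z : ℂ} (ha : ‖a‖ < 1) (hz : z ∈ uD) :
    (1 - ‖z‖^2)^(2:ℕ) * ‖d2kA a z‖ ≤ 76 := by
  have hz1 : ‖z‖ ≤ 1 := (mem_uD.1 hz).le
  have hL2 := log_two_le_LA ha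
  have hL0 := LA_pos ha
  have hP0 : (0:ℝ) ≤ (1 - ‖z‖^2)^(2:ℕ) := by positivity
  have hd2 := zygS_d2lA ha hz
  have hdsq : ‖(dlA a z)^2‖ = ‖d2lA a z‖ := by
    rw [norm_pow, norm_dlA ha hz1, norm_d2lA, div_pow]
  have hlb := norm_lA_le ha hz1
  have hLinv : ‖(((LA a : ℝ) : ℂ))⁻¹‖ = (LA a)⁻¹ := by
    rw [norm_inv, Complex.norm_real, Real.norm_of_nonneg hL0.le]
  have hnorm : ‖d2kA a z‖ ≤ (2 * ‖d2lA a z‖ + 2 * (7 * LA a) * ‖d2lA a z‖) * (LA a)⁻¹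
      + 2 * ‖d2lA a z‖ := by
    rw [d2kA]
    refine le_trans (norm_sub_le _ _) (add_le_add ?_ ?_)
    · rw [norm_mul, hLinv]
      apply mul_le_mul_of_nonneg_right _ (by positivity)
      refine le_trans (norm_add_le _ _) (add_le_add ?_ ?_)
      · rw [norm_mul, RCLike.norm_two, hdsq]
      · rw [norm_mul, norm_mul, RCLike.norm_two]
        apply mul_le_mul_of_nonneg_right _ (norm_nonneg _)
        exact mul_le_mul_of_nonneg_left hlb (by norm_num)
    · rw [norm_mul, RCLike.norm_two]
  have hkey : (1 - ‖z‖^2)^(2:ℕ) * ‖d2lA a z‖ ≤ 4 := hd2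
  calc (1 - ‖z‖^2)^(2:ℕ) * ‖d2kA a z‖
      ≤ (1 - ‖z‖^2)^(2:ℕ) * ((2 * ‖d2lA a z‖ + 2 * (7 * LA a) * ‖d2lA a z‖) * (LA a)⁻¹
        + 2 * ‖d2lA a z‖) := mul_le_mul_of_nonneg_left hnorm hP0
    _ = (2 * ((1 - ‖z‖^2)^(2:ℕ) * ‖d2lA a z‖) + 14 * ((1 - ‖z‖^2)^(2:ℕ) * ‖d2lA a z‖) * LA a)
        * (LA a)⁻¹ + 2 * ((1 - ‖z‖^2)^(2:ℕ) * ‖d2lA a z‖) := by ring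
    _ ≤ (2 * 4 + 14 * 4 * LA a) * (LA a)⁻¹ + 2 * 4 := by
        have hd2nn : 0 ≤ (1 - ‖z‖^2)^(2:ℕ) * ‖d2lA a z‖ := mul_nonneg hP0 (norm_nonneg _)
        have h1 : 2 * ((1 - ‖z‖^2)^(2:ℕ) * ‖d2lA a z‖)
            + 14 * ((1 - ‖z‖^2)^(2:ℕ) * ‖d2lA a z‖) * LA a ≤ 2 * 4 + 14 * 4 * LA a := by
          have := mul_le_mul_of_nonneg_right hkey hL0.le
          nlinarith [hkey]
        have h2 : 2 * ((1 - ‖z‖^2)^(2:ℕ) * ‖d2lA a z‖) ≤ 2 * 4 :=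
          mul_le_mul_of_nonneg_left hkey (by norm_num)
        exact add_le_add (mul_le_mul_of_nonneg_right h1 (by positivity)) h2
    _ = 8 * (LA a)⁻¹ + 56 + 8 := by
        field_simp
        ring
    _ ≤ 76 := by
        have h23 := two_thirds_le_log_two
        have hLA : (2:ℝ)/3 ≤ LA a := le_trans h23 hL2
        have : (LA a)⁻¹ ≤ 3/2 := by
          rw [inv_le_comm₀ hL0 (by norm_num)]
          linarith
        linarith

lemma kA_zero_norm {a : ℂ} (ha : ‖a‖ < 1) : ‖kA a 0‖ ≤ 3 := by
  have hL2 := log_two_le_LA ha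
  have hL0 := LA_pos ha
  have hlt : Real.log 2 ≤ 1 := by
    have := Real.log_two_lt_d9; linarith
  rw [kA, lA_zero, log_two_complex]
  refine le_trans (norm_sub_le _ _) ?_
  have h1 : ‖(((Real.log 2 : ℝ) : ℂ))^2 * (((LA a : ℝ) : ℂ))⁻¹‖ ≤ Real.log 2 := by
    rw [norm_mul, norm_pow, norm_inv, Complex.norm_real, Complex.norm_real,
      Real.norm_of_nonneg (Real.log_nonneg (by norm_num)), Real.norm_of_nonneg hL0.le]
    rw [← div_eq_mul_inv, div_le_iff₀ hL0]
    nlinarith [Real.log_nonneg (show (1:ℝ) ≤ 2 by norm_num)]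
  have h2 : ‖2 * (((Real.log 2 : ℝ) : ℂ))‖ ≤ 2 := by
    rw [norm_mul, RCLike.norm_two, Complex.norm_real,
      Real.norm_of_nonneg (Real.log_nonneg (by norm_num))]
    linarith
  linarith
lemma dkA_zero_norm {a : ℂ} (ha : ‖a‖ < 1) : ‖dkA a 0‖ ≤ 4 := by
  have hL2 := log_two_le_LA ha
  have hL0 := LA_pos ha
  have hlt : Real.log 2 ≤ 1 := by
    have := Real.log_two_lt_d9; linarith
  rw [dkA, lA_zero, dlA_zero, log_two_complex]
  refine le_trans (norm_sub_le _ _) ?_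
  have h1 : ‖2 * (((Real.log 2 : ℝ) : ℂ)) * ((starRingEnd ℂ) a) * (((LA a : ℝ) : ℂ))⁻¹‖ ≤ 2 := by
    rw [norm_mul, norm_mul, norm_mul, RCLike.norm_two, norm_inv, Complex.norm_real, Complex.norm_real,
      RCLike.norm_conj, Real.norm_of_nonneg (Real.log_nonneg (by norm_num)),
      Real.norm_of_nonneg hL0.le]
    have haa : ‖a‖ ≤ 1 := ha.le
    have : Real.log 2 * (LA a)⁻¹ ≤ 1 := by
      rw [← div_eq_mul_inv, div_le_one hL0]; exact hL2
    nlinarith [norm_nonneg a, Real.log_nonneg (show (1:ℝ) ≤ 2 by norm_num),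
      inv_nonneg.2 hL0.le]
  have h2 : ‖2 * ((starRingEnd ℂ) a)‖ ≤ 2 := by
    rw [norm_mul, RCLike.norm_two, RCLike.norm_conj]
    nlinarith [norm_nonneg a]
  linarith

/-! ### sSup and zNorm facts -/

lemma bddAbove_zygS {a : ℝ} {f : ℂ → ℂ} {M : ℝ} (h : ∀ z ∈ uD, zygS a f z ≤ M) :
    BddAbove (zygS a f '' uD) := by
  refine ⟨M, ?_⟩
  rintro _ ⟨z, hz, rfl⟩
  exact h z hz

lemma zygS_le_sSup {a : ℝ} {f : ℂ → ℂ} {M : ℝ} (h : ∀ z ∈ uD, zygS a f z ≤ M)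
    {z : ℂ} (hz : z ∈ uD) : zygS a f z ≤ sSup (zygS a f '' uD) :=
  le_csSup (bddAbove_zygS h) ⟨z, hz, rfl⟩

lemma sSup_zygS_nonneg (a : ℝ) (f : ℂ → ℂ) : 0 ≤ sSup (zygS a f '' uD) := by
  apply Real.sSup_nonneg
  rintro _ ⟨z, hz, rfl⟩
  exact zygS_nonneg hz

lemma sSup_zygS_le {a : ℝ} {f : ℂ → ℂ} {M : ℝ} (hM : 0 ≤ M) (h : ∀ z ∈ uD, zygS a f z ≤ M) :
    sSup (zygS a f '' uD) ≤ M := by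
  apply Real.sSup_le _ hM
  rintro _ ⟨z, hz, rfl⟩
  exact h z hz

lemma zNorm_nonneg (a : ℝ) (f : ℂ → ℂ) : 0 ≤ zNorm a f := by
  have := sSup_zygS_nonneg a f
  have h1 := norm_nonneg (f 0)
  have h2 := norm_nonneg (deriv f 0)
  rw [zNorm]; linarith

lemma norm_f0_le_zNorm (a : ℝ) (f : ℂ → ℂ) : ‖f 0‖ ≤ zNorm a f := by
  have := sSup_zygS_nonneg a f
  have h2 := norm_nonneg (deriv f 0)
  rw [zNorm]; linarith

lemma norm_df0_le_zNorm (a : ℝ) (f : ℂ → ℂ) : ‖deriv f 0‖ ≤ zNorm a f := by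
  have := sSup_zygS_nonneg a f
  have h1 := norm_nonneg (f 0)
  rw [zNorm]; linarith

lemma sSup_le_zNorm (a : ℝ) (f : ℂ → ℂ) : sSup (zygS a f '' uD) ≤ zNorm a f := by
  have h1 := norm_nonneg (f 0)
  have h2 := norm_nonneg (deriv f 0)
  rw [zNorm]; linarith

/-! ### structure of the operator -/

section Tf

variable {φ g : ℂ → ℂ} (hφ : AnalyticOnNhd ℂ φ uD) (hφm : Set.MapsTo φ uD uD)
  (hg : AnalyticOnNhd ℂ g uD)

include hφ hφm hg in
lemma hfun_analytic {f : ℂ → ℂ} (hf : AnalyticOnNhd ℂ f uD) :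
    AnalyticOnNhd ℂ (fun w => f (φ w) * deriv g w) uD :=
  (hf.comp hφ hφm).mul hg.deriv

include hφ hφm hg in
lemma Tf_hasDerivAt {f : ℂ → ℂ} (hf : AnalyticOnNhd ℂ f uD) {z : ℂ} (hz : z ∈ uD) :
    HasDerivAt (UgCphi g φ f) (f (φ z) * deriv g z) z := by
  have := primitive_hasDerivAt (hfun_analytic hφ hφm hg hf) hz
  exact this

include hφ hφm hg in
lemma Tf_analytic {f : ℂ → ℂ} (hf : AnalyticOnNhd ℂ f uD) :
    AnalyticOnNhd ℂ (UgCphi g φ f) uD := by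
  apply DifferentiableOn.analyticOnNhd _ uD_open
  intro z hz
  exact (Tf_hasDerivAt hφ hφm hg hf hz).differentiableAt.differentiableWithinAt

lemma Tf_zero (f : ℂ → ℂ) : UgCphi g φ f 0 = 0 := by
  simp [UgCphi]

include hφ hφm hg in
lemma Tf_deriv {f : ℂ → ℂ} (hf : AnalyticOnNhd ℂ f uD) {z : ℂ} (hz : z ∈ uD) :
    deriv (UgCphi g φ f) z = f (φ z) * deriv g z :=
  (Tf_hasDerivAt hφ hφm hg hf hz).deriv

include hφ hφm hg in
lemma Tf_deriv2 {f : ℂ → ℂ} (hf : AnalyticOnNhd ℂ f uD) {z : ℂ} (hz : z ∈ uD) :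
    deriv (deriv (UgCphi g φ f)) z
      = deriv f (φ z) * deriv φ z * deriv g z + f (φ z) * deriv (deriv g) z := by
  have hev : deriv (UgCphi g φ f) =ᶠ[nhds z] fun w => f (φ w) * deriv g w := by
    filter_upwards [uD_open.mem_nhds hz] with w hw
    exact Tf_deriv hφ hφm hg hf hw
  rw [hev.deriv_eq]
  have h1 : HasDerivAt (fun w => f (φ w)) (deriv f (φ z) * deriv φ z) z :=
    ((hf (φ z) (hφm hz)).differentiableAt.hasDerivAt).comp z
      ((hφ z hz).differentiableAt.hasDerivAt)
  have h2 : HasDerivAt (deriv g) (deriv (deriv g) z) z :=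
    ((hg.deriv) z hz).differentiableAt.hasDerivAt
  exact (h1.mul h2).deriv

end Tf

/-! ### test functions: membership and norms -/

lemma zygS_eq_zero_of_deriv2_zero {a : ℝ} {f : ℂ → ℂ}
    (h : deriv (deriv f) = fun _ => 0) (z : ℂ) : zygS a f z = 0 := by
  rw [zygS, h]
  simp

lemma sSup_zygS_eq_zero {a : ℝ} {f : ℂ → ℂ} (h : deriv (deriv f) = fun _ => 0) :
    sSup (zygS a f '' uD) = 0 := by
  apply le_antisymm
  · exact sSup_zygS_le le_rfl (fun z _ => (zygS_eq_zero_of_deriv2_zero h z).le)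
  · exact sSup_zygS_nonneg a f

lemma deriv2_const_fun (c : ℂ) : deriv (deriv (fun _ : ℂ => c)) = fun _ => 0 := by
  rw [deriv_const']
  funext x
  exact deriv_const x (0:ℂ)

lemma deriv2_id_fun : deriv (deriv (fun z : ℂ => z)) = fun _ => 0 := by
  rw [deriv_id'']
  funext x
  exact deriv_const x (1:ℂ)

lemma memZ_const1 : memZ 2 (fun _ : ℂ => (1:ℂ)) :=
  ⟨analyticOn_const, 0, fun z _ => (zygS_eq_zero_of_deriv2_zero (deriv2_const_fun 1) z).le⟩

lemma zNorm_const1 : zNorm 2 (fun _ : ℂ => (1:ℂ)) = 1 := by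
  rw [zNorm, sSup_zygS_eq_zero (deriv2_const_fun 1), deriv_const']
  simp

lemma memZ_id : memZ 2 (fun z : ℂ => z) :=
  ⟨(analyticOnNhd_id (𝕜 := ℂ) (s := uD)).analyticOn, 0,
    fun z _ => (zygS_eq_zero_of_deriv2_zero deriv2_id_fun z).le⟩

lemma zNorm_id : zNorm 2 (fun z : ℂ => z) = 1 := by
  rw [zNorm, sSup_zygS_eq_zero deriv2_id_fun, deriv_id'']
  simp

lemma zygS_lA_le {a : ℂ} (ha : ‖a‖ < 1) {z : ℂ} (hz : z ∈ uD) : zygS 2 (lA a) z ≤ 4 := by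
  rw [zygS_two, lA_deriv2 ha hz]
  exact zygS_d2lA ha hz

lemma memZ_lA {a : ℂ} (ha : ‖a‖ < 1) : memZ 2 (lA a) :=
  ⟨(lA_analytic ha).analyticOn, 4, fun z hz => zygS_lA_le ha hz⟩

lemma zNorm_lA_le {a : ℂ} (ha : ‖a‖ < 1) : zNorm 2 (lA a) ≤ 6 := by
  rw [zNorm]
  have h1 : ‖lA a 0‖ = Real.log 2 := norm_lA_zero a
  have h2 : deriv (lA a) 0 = dlA a 0 := lA_deriv ha (by norm_num)
  have h3 : sSup (zygS 2 (lA a) '' uD) ≤ 4 :=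
    sSup_zygS_le (by norm_num) (fun z hz => zygS_lA_le ha hz)
  have h4 : Real.log 2 ≤ 1 := by have := Real.log_two_lt_d9; linarith
  rw [h1, h2, norm_dlA_zero]
  linarith [ha.le]

lemma zygS_kA_le {a : ℂ} (ha : ‖a‖ < 1) {z : ℂ} (hz : z ∈ uD) : zygS 2 (kA a) z ≤ 76 := by
  rw [zygS_two, kA_deriv2 ha hz]
  exact zygS_d2kA ha hz

lemma memZ_kA {a : ℂ} (ha : ‖a‖ < 1) : memZ 2 (kA a) :=
  ⟨(kA_analytic ha).analyticOn, 76, fun z hz => zygS_kA_le ha hz⟩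

lemma zNorm_kA_le {a : ℂ} (ha : ‖a‖ < 1) : zNorm 2 (kA a) ≤ 83 := by
  rw [zNorm]
  have h2 : deriv (kA a) 0 = dkA a 0 := kA_deriv ha (by norm_num)
  have h3 : sSup (zygS 2 (kA a) '' uD) ≤ 76 :=
    sSup_zygS_le (by norm_num) (fun z hz => zygS_kA_le ha hz)
  rw [h2]
  linarith [kA_zero_norm ha, dkA_zero_norm ha]

/-! ### sufficiency -/

lemma rpow_beta_nonneg {β : ℝ} {z : ℂ} (hz : z ∈ uD) : 0 ≤ (1 - ‖z‖^2) ^ β :=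
  Real.rpow_nonneg (one_sub_sq_pos hz).le β

lemma backward {β : ℝ} {φ g : ℂ → ℂ} (hφ : AnalyticOnNhd ℂ φ uD)
    (hφm : Set.MapsTo φ uD uD) (hg : AnalyticOnNhd ℂ g uD) {M₁ M₂ : ℝ}
    (h1 : ∀ z ∈ uD, (1 - ‖z‖ ^ 2) ^ β * ‖deriv g z * deriv φ z‖ / (1 - ‖φ z‖ ^ 2) ^ (1:ℝ) ≤ M₁)
    (h2 : ∀ z ∈ uD, (1 - ‖z‖ ^ 2) ^ β * Real.log (2 / (1 - ‖φ z‖ ^ 2)) * ‖deriv (deriv g) z‖ ≤ M₂) :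
    boundedOp 2 β (UgCphi g φ) := by
  have hM1 : 0 ≤ M₁ := by
    refine le_trans ?_ (h1 0 zero_mem_uD)
    apply div_nonneg (mul_nonneg (rpow_beta_nonneg zero_mem_uD) (norm_nonneg _))
    exact Real.rpow_nonneg (one_sub_sq_pos (hφm zero_mem_uD)).le _
  have hM2 : 0 ≤ M₂ := by
    refine le_trans ?_ (h2 0 zero_mem_uD)
    apply mul_nonneg (mul_nonneg (rpow_beta_nonneg zero_mem_uD) ?_) (norm_nonneg _)
    apply Real.log_nonneg
    rw [le_div_iff₀ (one_sub_sq_pos (hφm zero_mem_uD))]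
    nlinarith [one_sub_sq_pos (hφm zero_mem_uD), norm_nonneg (φ 0)]
  set L₀ : ℝ := Real.log (2 / (1 - ‖φ 0‖^2)) with hL₀
  have hL₀nn : 0 ≤ L₀ := by
    apply Real.log_nonneg
    rw [le_div_iff₀ (one_sub_sq_pos (hφm zero_mem_uD))]
    nlinarith [one_sub_sq_pos (hφm zero_mem_uD), norm_nonneg (φ 0)]
  set C : ℝ := 12 * L₀ * ‖deriv g 0‖ + 3*M₁ + 12*M₂ + 1 with hC
  have hCpos : 0 < C := by
    have : 0 ≤ 12 * L₀ * ‖deriv g 0‖ := by positivity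
    rw [hC]; linarith
  -- the pointwise estimate, for every `f ∈ Z²`
  have main : ∀ f, memZ 2 f → ∀ z ∈ uD,
      zygS β (UgCphi g φ f) z ≤ (3*M₁ + 12*M₂) * zNorm 2 f := by
    intro f hf z hz
    obtain ⟨hfa, Mf, hMf⟩ := hf
    have hfn : AnalyticOnNhd ℂ f uD := (uD_open.analyticOn_iff_analyticOnNhd).1 hfa
    set Ms : ℝ := sSup (zygS 2 f '' uD) with hMs
    have hMsb : ∀ w ∈ uD, zygS 2 f w ≤ Ms := fun w hw => zygS_le_sSup hMf hw
    set N : ℝ := zNorm 2 f with hN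
    have hf0 : ‖f 0‖ ≤ N := norm_f0_le_zNorm 2 f
    have hdf0 : ‖deriv f 0‖ ≤ N := norm_df0_le_zNorm 2 f
    have hMsN : Ms ≤ N := sSup_le_zNorm 2 f
    have hMsnn : 0 ≤ Ms := sSup_zygS_nonneg 2 f
    have hNnn : 0 ≤ N := zNorm_nonneg 2 f
    have hφz : φ z ∈ uD := hφm hz
    have hφpos := one_sub_sq_pos hφz
    set P : ℝ := (1 - ‖z‖^2) ^ β with hP
    have hPnn : 0 ≤ P := rpow_beta_nonneg hz
    set L : ℝ := Real.log (2 / (1 - ‖φ z‖^2)) with hLz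
    have hLnn : 0 ≤ L := by
      apply Real.log_nonneg
      rw [le_div_iff₀ hφpos]
      nlinarith [norm_nonneg (φ z)]
    -- derivative estimates
    have hd1 : ‖deriv f (φ z)‖ ≤ 3 * N / (1 - ‖φ z‖^2) := by
      refine le_trans (deriv_growth hfn hMsb hφz) ?_
      exact (div_le_div_iff_of_pos_right hφpos).2 (by linarith)
    have hd0 : ‖f (φ z)‖ ≤ 12 * N * L := by
      refine le_trans (value_growth hfn hMsb hφz) ?_
      rw [← hLz]
      have : ‖f 0‖ + ‖deriv f 0‖ + 2*Ms ≤ 4 * N := by linarith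
      nlinarith [hLnn]
    -- combine
    rw [zygS, Tf_deriv2 hφ hφm hg hfn hz, ← hP]
    have hA : ‖deriv f (φ z) * deriv φ z * deriv g z + f (φ z) * deriv (deriv g) z‖
        ≤ ‖deriv f (φ z)‖ * ‖deriv φ z * deriv g z‖ + ‖f (φ z)‖ * ‖deriv (deriv g) z‖ := by
      refine le_trans (norm_add_le _ _) (add_le_add ?_ ?_)
      · rw [mul_assoc, norm_mul]
      · rw [norm_mul]
    have hterm1 : P * (‖deriv f (φ z)‖ * ‖deriv φ z * deriv g z‖) ≤ 3 * N * M₁ := by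
      have e1 := h1 z hz
      rw [Real.rpow_one] at e1
      have e2 : P * ‖deriv φ z * deriv g z‖ / (1 - ‖φ z‖^2) ≤ M₁ := by
        rw [norm_mul, mul_comm ‖deriv φ z‖, ← norm_mul]
        exact e1
      calc P * (‖deriv f (φ z)‖ * ‖deriv φ z * deriv g z‖)
          ≤ P * ((3 * N / (1 - ‖φ z‖^2)) * ‖deriv φ z * deriv g z‖) := by
            apply mul_le_mul_of_nonneg_left _ hPnn
            exact mul_le_mul_of_nonneg_right hd1 (norm_nonneg _)
        _ = 3 * N * (P * ‖deriv φ z * deriv g z‖ / (1 - ‖φ z‖^2)) := by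
            field_simp
        _ ≤ 3 * N * M₁ := by
            apply mul_le_mul_of_nonneg_left e2 (by positivity)
    have hterm2 : P * (‖f (φ z)‖ * ‖deriv (deriv g) z‖) ≤ 12 * N * M₂ := by
      have e2 := h2 z hz
      calc P * (‖f (φ z)‖ * ‖deriv (deriv g) z‖)
          ≤ P * ((12 * N * L) * ‖deriv (deriv g) z‖) := by
            apply mul_le_mul_of_nonneg_left _ hPnn
            exact mul_le_mul_of_nonneg_right hd0 (norm_nonneg _)
        _ = 12 * N * (P * L * ‖deriv (deriv g) z‖) := by ring
        _ ≤ 12 * N * M₂ := by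
            apply mul_le_mul_of_nonneg_left e2 (by positivity)
    calc P * ‖deriv f (φ z) * deriv φ z * deriv g z + f (φ z) * deriv (deriv g) z‖
        ≤ P * (‖deriv f (φ z)‖ * ‖deriv φ z * deriv g z‖ + ‖f (φ z)‖ * ‖deriv (deriv g) z‖) :=
          mul_le_mul_of_nonneg_left hA hPnn
      _ = P * (‖deriv f (φ z)‖ * ‖deriv φ z * deriv g z‖)
          + P * (‖f (φ z)‖ * ‖deriv (deriv g) z‖) := by ring
      _ ≤ 3 * N * M₁ + 12 * N * M₂ := add_le_add hterm1 hterm2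
      _ = (3*M₁ + 12*M₂) * N := by ring
  constructor
  · intro f hf
    have hfn : AnalyticOnNhd ℂ f uD := (uD_open.analyticOn_iff_analyticOnNhd).1 hf.1
    exact ⟨(Tf_analytic hφ hφm hg hfn).analyticOn, (3*M₁ + 12*M₂) * zNorm 2 f, main f hf⟩
  · refine ⟨C, hCpos, ?_⟩
    intro f hf
    have hfn : AnalyticOnNhd ℂ f uD := (uD_open.analyticOn_iff_analyticOnNhd).1 hf.1
    obtain ⟨hfa, Mf, hMf⟩ := hf
    set N : ℝ := zNorm 2 f with hN
    have hNnn : 0 ≤ N := zNorm_nonneg 2 f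
    have hMsb : ∀ w ∈ uD, zygS 2 f w ≤ sSup (zygS 2 f '' uD) := fun w hw => zygS_le_sSup hMf hw
    have hval : ‖f (φ 0)‖ ≤ 12 * N * L₀ := by
      refine le_trans (value_growth hfn hMsb (hφm zero_mem_uD)) ?_
      have hf0 : ‖f 0‖ ≤ N := norm_f0_le_zNorm 2 f
      have hdf0 : ‖deriv f 0‖ ≤ N := norm_df0_le_zNorm 2 f
      have hMsN : sSup (zygS 2 f '' uD) ≤ N := sSup_le_zNorm 2 f
      have hMsnn : 0 ≤ sSup (zygS 2 f '' uD) := sSup_zygS_nonneg 2 f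
      rw [← hL₀]
      nlinarith [hL₀nn]
    have hd0 : ‖deriv (UgCphi g φ f) 0‖ ≤ 12 * N * L₀ * ‖deriv g 0‖ := by
      rw [Tf_deriv hφ hφm hg hfn zero_mem_uD, norm_mul]
      exact mul_le_mul_of_nonneg_right hval (norm_nonneg _)
    have hsup : sSup (zygS β (UgCphi g φ f) '' uD) ≤ (3*M₁ + 12*M₂) * N := by
      apply sSup_zygS_le (by positivity)
      exact main f ⟨hfa, Mf, hMf⟩
    have hTf0 : ‖UgCphi g φ f 0‖ = 0 := by rw [Tf_zero]; simp
    rw [zNorm, hTf0]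
    calc 0 + ‖deriv (UgCphi g φ f) 0‖ + sSup (zygS β (UgCphi g φ f) '' uD)
        ≤ 0 + 12 * N * L₀ * ‖deriv g 0‖ + (3*M₁ + 12*M₂) * N := by
          exact add_le_add (add_le_add le_rfl hd0) hsup
      _ ≤ C * N := by
          rw [hC]
          nlinarith [hNnn]

/-! ### necessity -/

lemma forward {β : ℝ} {φ g : ℂ → ℂ} (hφ : AnalyticOnNhd ℂ φ uD)
    (hφm : Set.MapsTo φ uD uD) (hg : AnalyticOnNhd ℂ g uD)
    (hb : boundedOp 2 β (UgCphi g φ)) :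
    (∃ M : ℝ, ∀ z ∈ uD,
        (1 - ‖z‖ ^ 2) ^ β * ‖deriv g z * deriv φ z‖ / (1 - ‖φ z‖ ^ 2) ^ (1:ℝ) ≤ M) ∧
    (∃ M : ℝ, ∀ z ∈ uD,
        (1 - ‖z‖ ^ 2) ^ β * Real.log (2 / (1 - ‖φ z‖ ^ 2)) * ‖deriv (deriv g) z‖ ≤ M) := by
  obtain ⟨hmap, C, hCpos, hest⟩ := hb
  -- pointwise extraction
  have hpt : ∀ f, memZ 2 f → ∀ w ∈ uD,
      (1 - ‖w‖^2) ^ β *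
        ‖deriv f (φ w) * deriv φ w * deriv g w + f (φ w) * deriv (deriv g) w‖
      ≤ C * zNorm 2 f := by
    intro f hf w hw
    have hfn : AnalyticOnNhd ℂ f uD := (uD_open.analyticOn_iff_analyticOnNhd).1 hf.1
    obtain ⟨hTa, MT, hMT⟩ := hmap f hf
    have h1 : zygS β (UgCphi g φ f) w ≤ sSup (zygS β (UgCphi g φ f) '' uD) :=
      zygS_le_sSup hMT hw
    have h2 := sSup_le_zNorm β (UgCphi g φ f)
    have h3 := hest f hf
    have h4 : zygS β (UgCphi g φ f) w = (1 - ‖w‖^2) ^ β *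
        ‖deriv f (φ w) * deriv φ w * deriv g w + f (φ w) * deriv (deriv g) w‖ := by
      rw [zygS, Tf_deriv2 hφ hφm hg hfn hw]
    linarith
  -- step A : bound on g''
  have hA : ∀ w ∈ uD, (1 - ‖w‖^2) ^ β * ‖deriv (deriv g) w‖ ≤ C := by
    intro w hw
    have := hpt (fun _ => (1:ℂ)) memZ_const1 w hw
    rw [zNorm_const1, mul_one] at this
    have hd : deriv (fun _ : ℂ => (1:ℂ)) (φ w) = 0 := deriv_const _ _
    rw [hd] at this
    simpa using this
  -- step B : bound on φ' g'
  have hB : ∀ w ∈ uD, (1 - ‖w‖^2) ^ β * ‖deriv φ w * deriv g w‖ ≤ 2 * C := by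
    intro w hw
    have hid := hpt (fun z : ℂ => z) memZ_id w hw
    rw [zNorm_id, mul_one] at hid
    have hd : deriv (fun z : ℂ => z) (φ w) = 1 := deriv_id (φ w)
    rw [hd, one_mul] at hid
    have hφw1 : ‖φ w‖ ≤ 1 := (mem_uD.1 (hφm hw)).le
    have hPnn : 0 ≤ (1 - ‖w‖^2) ^ β := rpow_beta_nonneg hw
    have htri : ‖deriv φ w * deriv g w‖
        ≤ ‖deriv φ w * deriv g w + φ w * deriv (deriv g) w‖ + ‖φ w * deriv (deriv g) w‖ := by
      have := norm_sub_le (deriv φ w * deriv g w + φ w * deriv (deriv g) w)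
        (φ w * deriv (deriv g) w)
      simpa using this
    have hsec : (1 - ‖w‖^2) ^ β * ‖φ w * deriv (deriv g) w‖ ≤ C := by
      rw [norm_mul]
      calc (1 - ‖w‖^2) ^ β * (‖φ w‖ * ‖deriv (deriv g) w‖)
          ≤ (1 - ‖w‖^2) ^ β * (1 * ‖deriv (deriv g) w‖) := by
            apply mul_le_mul_of_nonneg_left _ hPnn
            exact mul_le_mul_of_nonneg_right hφw1 (norm_nonneg _)
        _ = (1 - ‖w‖^2) ^ β * ‖deriv (deriv g) w‖ := by ring
        _ ≤ C := hA w hw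
    calc (1 - ‖w‖^2) ^ β * ‖deriv φ w * deriv g w‖
        ≤ (1 - ‖w‖^2) ^ β * (‖deriv φ w * deriv g w + φ w * deriv (deriv g) w‖
            + ‖φ w * deriv (deriv g) w‖) := mul_le_mul_of_nonneg_left htri hPnn
      _ = (1 - ‖w‖^2) ^ β * ‖deriv φ w * deriv g w + φ w * deriv (deriv g) w‖
            + (1 - ‖w‖^2) ^ β * ‖φ w * deriv (deriv g) w‖ := by ring
      _ ≤ C + C := add_le_add hid hsec
      _ = 2 * C := by ring
  -- step C : the log condition, via `kA`
  have hC2 : ∀ w ∈ uD,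
      (1 - ‖w‖^2) ^ β * Real.log (2 / (1 - ‖φ w‖^2)) * ‖deriv (deriv g) w‖ ≤ 83 * C := by
    intro w hw
    set a : ℂ := φ w with hadef
    have ha : ‖a‖ < 1 := mem_uD.1 (hφm hw)
    have hk := hpt (kA a) (memZ_kA ha) w hw
    have hd : deriv (kA a) a = 0 := by
      rw [kA_deriv ha ha.le, dkA_self ha]
    rw [hd, zero_mul, zero_mul, zero_add, kA_self ha] at hk
    have hnorm : ‖-((LA a : ℝ) : ℂ) * deriv (deriv g) w‖ = LA a * ‖deriv (deriv g) w‖ := by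
      rw [norm_mul, norm_neg, Complex.norm_real, Real.norm_of_nonneg (LA_pos ha).le]
    rw [hnorm] at hk
    have hzk := zNorm_kA_le ha
    have hLA : LA a = Real.log (2 / (1 - ‖φ w‖^2)) := by rw [LA, hadef]
    calc (1 - ‖w‖^2) ^ β * Real.log (2 / (1 - ‖φ w‖^2)) * ‖deriv (deriv g) w‖
        = (1 - ‖w‖^2) ^ β * (LA a * ‖deriv (deriv g) w‖) := by rw [hLA]; ring
      _ ≤ C * zNorm 2 (kA a) := hk
      _ ≤ 83 * C := by nlinarith [hCpos]
  -- step D : the first condition, via `lA`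
  have hD : ∀ w ∈ uD,
      (1 - ‖w‖^2) ^ β * ‖deriv g w * deriv φ w‖ / (1 - ‖φ w‖^2) ^ (1:ℝ) ≤ 178 * C := by
    intro w hw
    set a : ℂ := φ w with hadef
    have ha : ‖a‖ < 1 := mem_uD.1 (hφm hw)
    have hapos : (0:ℝ) < 1 - ‖a‖^2 := one_sub_sq_pos (hφm hw)
    have hPnn : 0 ≤ (1 - ‖w‖^2) ^ β := rpow_beta_nonneg hw
    rw [Real.rpow_one]
    have hcomm : ‖deriv g w * deriv φ w‖ = ‖deriv φ w * deriv g w‖ := by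
      rw [norm_mul, norm_mul]; ring
    rw [hcomm]
    rcases le_or_gt (1/2 : ℝ) ‖a‖ with hcase | hcase
    · -- large |a| : use the lA test function
      have hl := hpt (lA a) (memZ_lA ha) w hw
      have hd : deriv (lA a) a = dlA a a := lA_deriv ha ha.le
      rw [hd, lA_self ha] at hl
      have hzl := zNorm_lA_le ha
      have hl6 : (1 - ‖w‖^2) ^ β *
          ‖dlA a a * deriv φ w * deriv g w + ((LA a : ℝ) : ℂ) * deriv (deriv g) w‖
          ≤ 6 * C := le_trans hl (by nlinarith [hCpos])
      have htri : ‖dlA a a * deriv φ w * deriv g w‖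
          ≤ ‖dlA a a * deriv φ w * deriv g w + ((LA a : ℝ) : ℂ) * deriv (deriv g) w‖
            + ‖((LA a : ℝ) : ℂ) * deriv (deriv g) w‖ := by
        have := norm_sub_le
          (dlA a a * deriv φ w * deriv g w + ((LA a : ℝ) : ℂ) * deriv (deriv g) w)
          (((LA a : ℝ) : ℂ) * deriv (deriv g) w)
        simpa using this
      have hLnorm : ‖((LA a : ℝ) : ℂ) * deriv (deriv g) w‖
          = LA a * ‖deriv (deriv g) w‖ := by
        rw [norm_mul, Complex.norm_real, Real.norm_of_nonneg (LA_pos ha).le]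
      have hterm : (1 - ‖w‖^2) ^ β * (LA a * ‖deriv (deriv g) w‖) ≤ 83 * C := by
        rw [LA, hadef, ← mul_assoc]
        exact hC2 w hw
      have hmain : (1 - ‖w‖^2) ^ β * (‖dlA a a‖ * ‖deriv φ w * deriv g w‖) ≤ 89 * C := by
        calc (1 - ‖w‖^2) ^ β * (‖dlA a a‖ * ‖deriv φ w * deriv g w‖)
            = (1 - ‖w‖^2) ^ β * ‖dlA a a * deriv φ w * deriv g w‖ := by
              rw [← norm_mul, ← mul_assoc]
          _ ≤ (1 - ‖w‖^2) ^ β *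
              (‖dlA a a * deriv φ w * deriv g w + ((LA a : ℝ) : ℂ) * deriv (deriv g) w‖
                + ‖((LA a : ℝ) : ℂ) * deriv (deriv g) w‖) :=
              mul_le_mul_of_nonneg_left htri hPnn
          _ = (1 - ‖w‖^2) ^ β *
                ‖dlA a a * deriv φ w * deriv g w + ((LA a : ℝ) : ℂ) * deriv (deriv g) w‖
              + (1 - ‖w‖^2) ^ β * (LA a * ‖deriv (deriv g) w‖) := by rw [hLnorm]; ring
          _ ≤ 6 * C + 83 * C := add_le_add hl6 hterm
          _ = 89 * C := by ring
      rw [norm_dlA_self ha] at hmain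
      -- ‖a‖ ≥ 1/2 : conclude
      have hcancel : ‖a‖ / (1 - ‖a‖^2) * (1 - ‖a‖^2) = ‖a‖ := div_mul_cancel₀ _ hapos.ne'
      have h2a : (1 - ‖w‖^2) ^ β * ‖deriv φ w * deriv g w‖ / (1 - ‖a‖^2)
          ≤ 2 * ((1 - ‖w‖^2) ^ β * (‖a‖ / (1 - ‖a‖^2) * ‖deriv φ w * deriv g w‖)) := by
        rw [div_le_iff₀ hapos]
        have expand : 2 * ((1 - ‖w‖^2) ^ β * (‖a‖ / (1 - ‖a‖^2) * ‖deriv φ w * deriv g w‖))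
            * (1 - ‖a‖^2)
            = 2 * ((1 - ‖w‖^2) ^ β * ‖deriv φ w * deriv g w‖)
              * (‖a‖ / (1 - ‖a‖^2) * (1 - ‖a‖^2)) := by ring
        rw [expand, hcancel]
        nlinarith [mul_nonneg hPnn (norm_nonneg (deriv φ w * deriv g w)), hcase]
      calc (1 - ‖w‖^2) ^ β * ‖deriv φ w * deriv g w‖ / (1 - ‖a‖^2)
          ≤ 2 * ((1 - ‖w‖^2) ^ β * (‖a‖ / (1 - ‖a‖^2) * ‖deriv φ w * deriv g w‖)) := h2a
        _ ≤ 2 * (89 * C) := by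
            apply mul_le_mul_of_nonneg_left hmain (by norm_num)
        _ = 178 * C := by ring
    · -- small |a| : 1/(1-|a|²) ≤ 4/3
      have hfrac : (1 - ‖a‖^2)⁻¹ ≤ 4/3 := by
        rw [inv_le_comm₀ hapos (by norm_num)]
        nlinarith [norm_nonneg a]
      have hBw := hB w hw
      rw [div_eq_mul_inv]
      calc (1 - ‖w‖^2) ^ β * ‖deriv φ w * deriv g w‖ * (1 - ‖a‖^2)⁻¹
          ≤ (2*C) * (4/3) := by
            apply mul_le_mul hBw hfrac (by positivity) (by positivity)
        _ ≤ 178 * C := by nlinarith [hCpos]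
  exact ⟨⟨178 * C, hD⟩, ⟨83 * C, hC2⟩⟩

theorem stmt_14 (α β : ℝ) (hα : α = 2) (hβ : 0 < β)
    (φ g : ℂ → ℂ) (hφ : AnalyticOn ℂ φ uD) (hφm : Set.MapsTo φ uD uD)
    (hg : AnalyticOn ℂ g uD) :
    boundedOp 2 β (UgCphi g φ) ↔
      ((∃ M : ℝ, ∀ z ∈ uD, (1 - ‖z‖ ^ 2) ^ β * ‖deriv g z * deriv φ z‖ / (1 - ‖φ z‖ ^ 2) ^ (1:ℝ) ≤ M) ∧ (∃ M : ℝ, ∀ z ∈ uD, (1 - ‖z‖ ^ 2) ^ β * Real.log (2 / (1 - ‖φ z‖ ^ 2)) * ‖deriv (deriv g) z‖ ≤ M)) := by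
  have hφn : AnalyticOnNhd ℂ φ uD := (uD_open.analyticOn_iff_analyticOnNhd).1 hφ
  have hgn : AnalyticOnNhd ℂ g uD := (uD_open.analyticOn_iff_analyticOnNhd).1 hg
  constructor
  · intro hb
    exact forward hφn hφm hgn hb
  · rintro ⟨⟨M₁, h1⟩, ⟨M₂, h2⟩⟩
    exact backward hφn hφm hgn h1 h2
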